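/- Let p ∈ ℝ^d be a probability vector with a strictly largest entry at index i* and distinct two largest coordinates. Define g_T(p) ∈ ℝ^d as the L1-normalization of the vector (H_T(p_1, τ_avg(p)), …, H_T(p_d, τ_avg(p))), where τ_avg(p) is the average of the two largest entries of p and H_T is the piecewise-linear Heaviside approximation. Then lim_{T→0⁺} g_T(p) = e_{i*}, the one-hot vector at index i*. -/

import Mathlib

open Filter Topology Set

/-- The piecewise-linear Heaviside approximation `H_T(p, τ)` of the EAST method. -/
noncomputable def Hpl (T τ p : ℝ) : ℝ :=
  let τm : ℝ := 5 * T * min τ (1 - τ)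
  let m1 : ℝ := T / (τ - τm / 2)
  let m2 : ℝ := (1 - 2 * T) / τm
  let m3 : ℝ := T / (1 - τ - τm / 2)
  if p < τ - τm / 2 then p * m1
  else if p > τ + τm / 2 then p * m3 + (1 - T - m3 * (τ + τm / 2))
  else p * m2 + (0.5 - m2 * τ)

lemma Hpl_low (T τ q : ℝ) (h : q < τ - 5 * T * min τ (1 - τ) / 2) :
    Hpl T τ q = q * (T / (τ - 5 * T * min τ (1 - τ) / 2)) := by
  simp only [Hpl]
  rw [if_pos h]

lemma Hpl_high (T τ q : ℝ) (h1 : ¬ q < τ - 5 * T * min τ (1 - τ) / 2)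
    (h2 : q > τ + 5 * T * min τ (1 - τ) / 2) :
    Hpl T τ q = q * (T / (1 - τ - 5 * T * min τ (1 - τ) / 2)) +
      (1 - T - (T / (1 - τ - 5 * T * min τ (1 - τ) / 2)) * (τ + 5 * T * min τ (1 - τ) / 2)) := by
  simp only [Hpl]
  rw [if_neg h1, if_pos h2]

/-- the L1-normalized vector of Heaviside approximations at the dynamic
threshold converges coordinatewise to the one-hot vector of the argmax as `T → 0⁺`. -/
theorem gT_tendsto_one_hot {d : ℕ} (hd : 2 ≤ d) (p : Fin d → ℝ)
    (hpos : ∀ i, 0 ≤ p i) (hsum : ∑ i, p i = 1)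
    (istar : Fin d) (hmax : ∀ j, j ≠ istar → p j < p istar) :
    ∀ i : Fin d,
      Tendsto
        (fun T =>
          Hpl T ((p istar + ⨆ j : {j : Fin d // j ≠ istar}, p j.1) / 2) (p i) /
            ∑ j, Hpl T ((p istar + ⨆ j : {j : Fin d // j ≠ istar}, p j.1) / 2) (p j))
        (𝓝[>] (0 : ℝ)) (𝓝 (if i = istar then 1 else 0)) := by
  have hne : Nonempty {j : Fin d // j ≠ istar} := by
    obtain ⟨j, hj⟩ := Fintype.exists_ne_of_one_lt_card (by rw [Fintype.card_fin]; omega) istar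
    exact ⟨⟨j, hj⟩⟩
  set M := ⨆ j : {j : Fin d // j ≠ istar}, p j.1 with hMdef
  obtain ⟨j0, hj0⟩ := Finite.exists_max (fun j : {j : Fin d // j ≠ istar} => p j.1)
  have hMle : M ≤ p j0.1 := ciSup_le hj0
  have hleM : ∀ j : {j : Fin d // j ≠ istar}, p j.1 ≤ M := fun j =>
    le_ciSup (f := fun j : {j : Fin d // j ≠ istar} => p j.1)
      (Set.Finite.bddAbove (Set.finite_range _)) j
  have hM0 : 0 ≤ M := le_trans (hpos _) (hleM (Classical.arbitrary _))
  have hMlt : M < p istar := lt_of_le_of_lt hMle (hmax _ j0.2)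
  have hp1 : p istar ≤ 1 := hsum ▸ Finset.single_le_sum (fun i _ => hpos i) (Finset.mem_univ istar)
  have hp0 : 0 < p istar := lt_of_le_of_lt (hpos j0.1) (hmax _ j0.2)
  set τ := (p istar + M) / 2 with hτdef
  have hτM : M < τ := by rw [hτdef]; linarith
  have hτp : τ < p istar := by rw [hτdef]; linarith
  have hτ0 : 0 < τ := by rw [hτdef]; linarith
  have hτ1 : τ < 1 := lt_of_lt_of_le hτp hp1
  set c := min τ (1 - τ) with hcdef
  have hc0 : 0 < c := lt_min hτ0 (by linarith)
  have hcτ : c ≤ τ := min_le_left _ _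
  have hcτ' : c ≤ 1 - τ := min_le_right _ _
  set ε := min ((τ - M) / (5 * c)) (min ((p istar - τ) / (5 * c)) (1 / 5)) with hεdef
  have hε0 : 0 < ε := by
    apply lt_min
    · exact div_pos (by linarith) (by positivity)
    · exact lt_min (div_pos (by linarith) (by positivity)) (by norm_num)
  have hmem : Ioo (0 : ℝ) ε ∈ 𝓝[>] (0 : ℝ) := Ioo_mem_nhdsGT_of_mem ⟨le_refl _, hε0⟩
  -- basic bounds for T in the window
  have hbounds : ∀ T ∈ Ioo (0 : ℝ) ε, 0 < T ∧ 5 * T * c < τ - M ∧ 5 * T * c < p istar - τ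
      ∧ 5 * T * c < 1 - τ := by
    intro T hT
    obtain ⟨hT0, hTε⟩ := hT
    have h1 : T < (τ - M) / (5 * c) := lt_of_lt_of_le hTε (min_le_left _ _)
    have h2 : T < (p istar - τ) / (5 * c) :=
      lt_of_lt_of_le hTε (le_trans (min_le_right _ _) (min_le_left _ _))
    have h3 : T < 1 / 5 := lt_of_lt_of_le hTε (le_trans (min_le_right _ _) (min_le_right _ _))
    have h5c : 0 < 5 * c := by positivity
    refine ⟨hT0, ?_, ?_, ?_⟩
    · have := (lt_div_iff₀ h5c).mp h1; linarith
    · have := (lt_div_iff₀ h5c).mp h2; linarith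
    · nlinarith
  -- per-coordinate limits
  have hlim : ∀ k : Fin d,
      Tendsto (fun T => Hpl T τ (p k)) (𝓝[>] (0 : ℝ)) (𝓝 (if k = istar then 1 else 0)) := by
    intro k
    by_cases hk : k = istar
    · subst hk
      simp only [if_pos rfl]
      have hden : Tendsto (fun T : ℝ => 1 - τ - 5 * T * c / 2) (𝓝 0) (𝓝 (1 - τ)) := by
        have hcont : Continuous fun T : ℝ => 1 - τ - 5 * T * c / 2 := by fun_prop
        simpa using hcont.tendsto 0
      have hid : Tendsto (fun T : ℝ => T) (𝓝 (0 : ℝ)) (𝓝 (0 : ℝ)) := Filter.tendsto_id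
      have hq : Tendsto (fun T : ℝ => T / (1 - τ - 5 * T * c / 2)) (𝓝 0) (𝓝 0) := by
        have := hid.div hden (by linarith : (1 : ℝ) - τ ≠ 0)
        rw [zero_div] at this
        exact this
      have hlin : Tendsto (fun T : ℝ => τ + 5 * T * c / 2) (𝓝 0) (𝓝 τ) := by
        have hcont : Continuous fun T : ℝ => τ + 5 * T * c / 2 := by fun_prop
        simpa using hcont.tendsto 0
      have hA : Tendsto (fun T : ℝ => p k * (T / (1 - τ - 5 * T * c / 2)) +
          (1 - T - (T / (1 - τ - 5 * T * c / 2)) * (τ + 5 * T * c / 2))) (𝓝 0) (𝓝 1) := by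
        have := (hq.const_mul (p k)).add
          (((tendsto_const_nhds (x := (1 : ℝ))).sub hid).sub (hq.mul hlin))
        simpa using this
      refine Tendsto.congr' ?_ (hA.mono_left nhdsWithin_le_nhds)
      filter_upwards [hmem] with T hT
      obtain ⟨hT0, hb1, hb2, hb3⟩ := hbounds T hT
      rw [Hpl_high T τ (p k) ?_ ?_]
      · push_neg
        nlinarith
      · show p k > τ + 5 * T * c / 2
        nlinarith
    · simp only [if_neg hk]
      have hpkM : p k ≤ M := hleM ⟨k, hk⟩
      have hden : Tendsto (fun T : ℝ => τ - 5 * T * c / 2) (𝓝 0) (𝓝 τ) := by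
        have hcont : Continuous fun T : ℝ => τ - 5 * T * c / 2 := by fun_prop
        simpa using hcont.tendsto 0
      have hid : Tendsto (fun T : ℝ => T) (𝓝 (0 : ℝ)) (𝓝 (0 : ℝ)) := Filter.tendsto_id
      have hq : Tendsto (fun T : ℝ => T / (τ - 5 * T * c / 2)) (𝓝 0) (𝓝 0) := by
        have := hid.div hden hτ0.ne'
        rw [zero_div] at this
        exact this
      have hA : Tendsto (fun T : ℝ => p k * (T / (τ - 5 * T * c / 2))) (𝓝 0) (𝓝 0) := by
        have := hq.const_mul (p k)
        simpa using this
      refine Tendsto.congr' ?_ (hA.mono_left nhdsWithin_le_nhds)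
      filter_upwards [hmem] with T hT
      obtain ⟨hT0, hb1, hb2, hb3⟩ := hbounds T hT
      rw [Hpl_low T τ (p k) ?_]
      nlinarith
  have hsumlim : Tendsto (fun T => ∑ j, Hpl T τ (p j)) (𝓝[>] (0 : ℝ)) (𝓝 1) := by
    have := tendsto_finset_sum Finset.univ (fun j (_ : j ∈ Finset.univ) => hlim j)
    simpa [Finset.sum_ite_eq'] using this
  intro i
  have := (hlim i).div hsumlim one_ne_zero
  rw [div_one] at this
  exact this
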